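/- Define I(a) = a ∫_0^∞ e^{-√a · s} √(s² + 4s) ds for a > 0. Then I(a) → 1 as a → 0⁺. -/

import Mathlib

open MeasureTheory Real Filter

lemma rpow2_eq {b : ℝ} : ((1:ℝ)/b)^(2:ℝ) = 1/b^2 := by
  rw [show (2:ℝ) = ((2:ℕ):ℝ) by norm_num, Real.rpow_natCast, div_pow, one_pow]

lemma int_exp_lin {b : ℝ} (hb : 0 < b) :
    ∫ s in Set.Ioi (0:ℝ), Real.exp (-(b*s)) * s = 1/b^2 := by
  have h := Real.integral_rpow_mul_exp_neg_mul_Ioi (a := 2) (r := b) two_pos hb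
  rw [Real.Gamma_two, mul_one, rpow2_eq] at h
  rw [← h]
  refine MeasureTheory.setIntegral_congr_fun measurableSet_Ioi (fun t ht => ?_)
  rw [show (2:ℝ)-1 = 1 by norm_num, Real.rpow_one, mul_comm]

lemma int_exp_const {b : ℝ} (hb : 0 < b) :
    ∫ s in Set.Ioi (0:ℝ), Real.exp (-(b*s)) = 1/b := by
  have h := Real.integral_rpow_mul_exp_neg_mul_Ioi (a := 1) (r := b) one_pos hb
  rw [Real.Gamma_one, mul_one, Real.rpow_one] at h
  rw [← h]
  refine MeasureTheory.setIntegral_congr_fun measurableSet_Ioi (fun t ht => ?_)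
  rw [show (1:ℝ)-1 = 0 by norm_num, Real.rpow_zero, one_mul]

lemma intg_lin {b : ℝ} (hb : 0 < b) :
    IntegrableOn (fun s => Real.exp (-(b*s)) * s) (Set.Ioi (0:ℝ)) := by
  have h := integrableOn_rpow_mul_exp_neg_mul_rpow (p := 1) (s := 1) (b := b)
      (by norm_num) one_pos hb
  refine h.congr_fun (fun x hx => ?_) measurableSet_Ioi
  have hx0 : (0:ℝ) < x := hx
  dsimp only
  rw [Real.rpow_one, mul_comm, neg_mul]

lemma intg_const {b : ℝ} (hb : 0 < b) :
    IntegrableOn (fun s => Real.exp (-(b*s))) (Set.Ioi (0:ℝ)) := by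
  have h := exp_neg_integrableOn_Ioi 0 hb
  refine h.congr_fun (fun x hx => by dsimp only; rw [neg_mul]) measurableSet_Ioi

lemma sqrt_bounds {s : ℝ} (hs : 0 < s) :
    s ≤ Real.sqrt (s^2 + 4*s) ∧ Real.sqrt (s^2 + 4*s) ≤ s + 2 := by
  have hnn : (0:ℝ) ≤ s^2 + 4*s := by nlinarith
  have h1 := Real.sq_sqrt hnn
  have h2 := Real.sqrt_nonneg (s^2 + 4*s)
  constructor <;> nlinarith [sq_nonneg (Real.sqrt (s^2+4*s) - s), sq_nonneg (Real.sqrt (s^2+4*s) - (s+2))]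

lemma intg_f {b : ℝ} (hb : 0 < b) :
    IntegrableOn (fun s => Real.exp (-(b*s)) * Real.sqrt (s^2 + 4*s)) (Set.Ioi (0:ℝ)) := by
  have hsum : IntegrableOn (fun s => Real.exp (-(b*s)) * s + 2 * Real.exp (-(b*s)))
      (Set.Ioi (0:ℝ)) := (intg_lin hb).add ((intg_const hb).const_mul 2)
  have hup : IntegrableOn (fun s => Real.exp (-(b*s)) * (s + 2)) (Set.Ioi (0:ℝ)) := by
    refine hsum.congr_fun (fun x _ => ?_) measurableSet_Ioi
    ring
  refine hup.mono' ?_ ?_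
  · refine (Real.continuous_exp.comp (by continuity)).aestronglyMeasurable.mul ?_
    exact (Real.continuous_sqrt.comp (by continuity)).aestronglyMeasurable
  · filter_upwards [self_mem_ae_restrict measurableSet_Ioi] with x hx
    have hx0 : (0:ℝ) < x := hx
    have hb2 := (sqrt_bounds hx0).2
    rw [Real.norm_eq_abs, abs_of_nonneg (by positivity)]
    exact mul_le_mul_of_nonneg_left hb2 (Real.exp_pos _).le

theorem laplace_integral_tendsto_one :
    Tendsto (fun a : ℝ =>
        a * ∫ s in Set.Ioi (0:ℝ), Real.exp (-(Real.sqrt a * s)) * Real.sqrt (s^2 + 4*s))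
      (nhdsWithin 0 (Set.Ioi 0)) (nhds 1) := by
  have key : ∀ a : ℝ, a ∈ Set.Ioi (0:ℝ) →
      1 ≤ a * ∫ s in Set.Ioi (0:ℝ), Real.exp (-(Real.sqrt a * s)) * Real.sqrt (s^2 + 4*s) ∧
      a * (∫ s in Set.Ioi (0:ℝ), Real.exp (-(Real.sqrt a * s)) * Real.sqrt (s^2 + 4*s))
        ≤ 1 + 2 * Real.sqrt a := by
    intro a ha
    have ha0 : (0:ℝ) < a := ha
    set b := Real.sqrt a with hbdef
    have hb : 0 < b := Real.sqrt_pos.mpr ha0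
    have hab : a = b^2 := (Real.sq_sqrt ha0.le).symm
    have hlow : (1:ℝ)/b^2 ≤ ∫ s in Set.Ioi (0:ℝ), Real.exp (-(b*s)) * Real.sqrt (s^2+4*s) := by
      rw [← int_exp_lin hb]
      refine setIntegral_mono_on (intg_lin hb) (intg_f hb) measurableSet_Ioi (fun x hx => ?_)
      exact mul_le_mul_of_nonneg_left (sqrt_bounds hx).1 (Real.exp_pos _).le
    have hhigh : (∫ s in Set.Ioi (0:ℝ), Real.exp (-(b*s)) * Real.sqrt (s^2+4*s))
        ≤ 1/b^2 + 2 * (1/b) := by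
      have hup : IntegrableOn (fun s => Real.exp (-(b*s)) * s + 2 * Real.exp (-(b*s)))
          (Set.Ioi (0:ℝ)) := (intg_lin hb).add ((intg_const hb).const_mul 2)
      have := setIntegral_mono_on (intg_f hb) hup measurableSet_Ioi (fun x hx => ?_)
      · rw [integral_add (intg_lin hb) ((intg_const hb).const_mul 2), int_exp_lin hb,
          integral_const_mul, int_exp_const hb] at this
        exact this
      · have h2 := (sqrt_bounds (Set.mem_Ioi.mp hx)).2
        nlinarith [Real.exp_pos (-(b*x)), (Real.exp_pos (-(b*x))).le]
    constructor
    · calc (1:ℝ) = b^2 * (1/b^2) := by field_simp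
        _ ≤ _ := by rw [hab]; exact mul_le_mul_of_nonneg_left hlow (by positivity)
    · calc a * _ ≤ a * (1/b^2 + 2*(1/b)) := mul_le_mul_of_nonneg_left hhigh ha0.le
        _ = 1 + 2 * b := by rw [hab]; field_simp
  refine tendsto_of_tendsto_of_tendsto_of_le_of_le'
    (g := fun _ : ℝ => (1:ℝ)) (h := fun a : ℝ => 1 + 2 * Real.sqrt a)
    tendsto_const_nhds ?_ ?_ ?_
  · have : Tendsto (fun a : ℝ => 1 + 2 * Real.sqrt a) (nhds 0) (nhds 1) := by
      have := Real.continuous_sqrt.tendsto 0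
      rw [Real.sqrt_zero] at this
      simpa using (tendsto_const_nhds.add (this.const_mul 2))
    exact this.mono_left nhdsWithin_le_nhds
  · exact eventually_nhdsWithin_of_forall (fun a ha => (key a ha).1)
  · exact eventually_nhdsWithin_of_forall (fun a ha => (key a ha).2)
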